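/- For every standard basis element σ of I^n the atom ⟨σ⟩ is an element of νI^n: each chain ⟨σ⟩_i^α is a nonnegative sum of standard basis elements, ε⟨σ⟩_0^− = ε⟨σ⟩_0^+ = 1, and ⟨σ⟩_i^+ − ⟨σ⟩_i^− = ∂⟨σ⟩_{i+1}^− = ∂⟨σ⟩_{i+1}^+ for all i. -/

import Mathlib

namespace CubicalNerve

/-- Signs: `true` is `+`, `false` is `−`, as an integer `±1`. -/
def sgn (α : Bool) : ℤ := if α then 1 else -1

/-- Sign twisting: `twist α m` is the sign `(−1)^m α`. -/
def twist (α : Bool) (m : ℕ) : Bool := if Even m then α else !α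

/-- A standard basis element of the chain complex `Iⁿ`: the factor at position `i` is
`u₁` when the value is `none`, and `∂^α u₁` when the value is `some α`. -/
abbrev Cell (n : ℕ) := Fin n → Option Bool

/-- The dimension of a standard basis element: the number of `u₁` factors. -/
def Cell.dim {n : ℕ} (σ : Cell n) : ℕ := (Finset.univ.filter fun i => σ i = none).card

/-- The number of `u₁` factors strictly before position `i`. -/
def Cell.below {n : ℕ} (σ : Cell n) (i : Fin n) : ℕ :=
  (Finset.univ.filter fun j => j < i ∧ σ j = none).card

/-- The number of `∂^± u₁` factors at positions `≤ j`. -/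
def Cell.sLe {n : ℕ} (σ : Cell n) (j : Fin n) : ℕ :=
  (Finset.univ.filter fun i => i ≤ j ∧ σ i ≠ none).card

/-- The chain groups of `Iⁿ` (all degrees taken together): the free abelian group
on the standard basis elements. -/
abbrev Chain (n : ℕ) := Cell n →₀ ℤ

/-- The boundary of a standard basis element (tensor-product boundary formula). -/
noncomputable def bdCell {n : ℕ} (σ : Cell n) : Chain n :=
  ∑ i ∈ Finset.univ.filter (fun i => σ i = none),
    ((-1 : ℤ) ^ σ.below i) •
      (Finsupp.single (Function.update σ i (some true)) 1 -
        Finsupp.single (Function.update σ i (some false)) 1)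

/-- The boundary operator of `Iⁿ`. -/
noncomputable def bd {n : ℕ} (c : Chain n) : Chain n := c.sum fun σ z => z • bdCell σ

/-- The positive part of a chain. -/
noncomputable def posPart {n : ℕ} (c : Chain n) : Chain n :=
  Finsupp.mapRange (fun z => max z 0) (by simp) c

/-- The negative part of a chain. -/
noncomputable def negPart {n : ℕ} (c : Chain n) : Chain n :=
  Finsupp.mapRange (fun z => max (-z) 0) (by simp) c

/-- `∂^α`: the positive (resp. negative) part of the boundary. -/
noncomputable def bdp {n : ℕ} (α : Bool) (c : Chain n) : Chain n :=
  if α then posPart (bd c) else negPart (bd c)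

/-- The atom `⟨σ⟩`: `atom σ α q` is the chain `⟨σ⟩_q^α = (∂^α)^{p−q} σ` for `q ≤ p = dim σ`,
and `0` for `q > p`. -/
noncomputable def atom {n : ℕ} (σ : Cell n) (α : Bool) (q : ℕ) : Chain n :=
  if q ≤ σ.dim then (bdp α)^[σ.dim - q] (Finsupp.single σ 1) else 0

/-- The augmentation (extended by zero on positive-degree chains). -/
noncomputable def aug {n : ℕ} (c : Chain n) : ℤ := c.sum fun σ z => if σ.dim = 0 then z else 0

/-- The top basis element `u_n = u₁ ⊗ ⋯ ⊗ u₁` of `Iⁿ`. -/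
def un (n : ℕ) : Cell n := fun _ => none

/-- The basis element `u_{k-1} ⊗ ∂^γ u₁ ⊗ u_{n-k}` (here `k : Fin n` is `k−1` in the
1-indexed notation of the paper). -/
def kcell {n : ℕ} (k : Fin n) (γ : Bool) : Cell n := Function.update (un n) k (some γ)

/-- Membership in `ν Iⁿ` for a double sequence `x`, where `x i α` is `x_i^α`:
each `x_i^α` is an `i`-chain which is a nonnegative sum of standard basis elements,
`ε x_0^- = ε x_0^+ = 1`, and `x_i^+ − x_i^− = ∂ x_{i+1}^- = ∂ x_{i+1}^+`. -/
def IsNu {n : ℕ} (x : ℕ → Bool → Chain n) : Prop :=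
  (∀ i α, ∀ σ ∈ (x i α).support, Cell.dim σ = i) ∧
  (∀ i α, 0 ≤ x i α) ∧
  (∀ α, aug (x 0 α) = 1) ∧
  (∀ i α, x i true - x i false = bd (x (i + 1) α))

/-- The double sequence of an atom. -/
noncomputable def atomSeq {n : ℕ} (σ : Cell n) : ℕ → Bool → Chain n := fun i α => atom σ α i

/-- The identity operation `d_p^α` on double sequences. -/
noncomputable def dOp {n : ℕ} (p : ℕ) (α : Bool) (x : ℕ → Bool → Chain n) : ℕ → Bool → Chain n :=
  fun i β => if i < p then x i β else if i = p then x p α else 0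

/-- The composition `x #_p y = x − d_p⁺ x + y`, formed termwise. -/
noncomputable def comp {n : ℕ} (p : ℕ) (x y : ℕ → Bool → Chain n) : ℕ → Bool → Chain n :=
  fun i β => x i β - dOp p true x i β + y i β

/-- Insertion of a new tensor factor at (0-indexed) position `i` (clamped into range). -/
def insertCell {m : ℕ} (i : ℕ) (v : Option Bool) (σ : Cell m) : Cell (m + 1) :=
  Fin.insertNth ⟨min i m, Nat.lt_succ_of_le (min_le_right i m)⟩ v σ

/-- The face chain map `∂̌_i^α : Iᵐ → Iᵐ⁺¹` (with `i` 1-indexed, `1 ≤ i ≤ m+1`),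
given on standard basis elements by `x ⊗ y ↦ x ⊗ ∂^α u₁ ⊗ y`. -/
noncomputable def faceL (m : ℕ) (i : ℕ) (α : Bool) : Chain m →ₗ[ℤ] Chain (m + 1) :=
  Finsupp.lmapDomain ℤ ℤ (insertCell (i - 1) (some α))

/-- `IsFaceComposite F` means that `F` is a composite of face chain maps `∂̌_i^α`. -/
inductive IsFaceComposite : ∀ {m n : ℕ}, (Chain m →ₗ[ℤ] Chain n) → Prop
  | id (m : ℕ) : IsFaceComposite (LinearMap.id : Chain m →ₗ[ℤ] Chain m)
  | step {m d : ℕ} {F : Chain m →ₗ[ℤ] Chain d} (i : ℕ) (α : Bool)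
      (h1 : 1 ≤ i) (h2 : i ≤ d + 1) :
      IsFaceComposite F → IsFaceComposite ((faceL d i α).comp F)

/-- `stdC m p ι a` is the composite `∂̌_{ι 0}^{a 0} ∘ ⋯ ∘ ∂̌_{ι (p-1)}^{a (p-1)} : Iᵐ → Iᵐ⁺ᵖ`
(so `∂̌_{ι (p-1)}^{a (p-1)}` is applied first). -/
noncomputable def stdC (m : ℕ) :
    (p : ℕ) → (Fin p → ℕ) → (Fin p → Bool) → (Chain m →ₗ[ℤ] Chain (m + p))
  | 0, _, _ => LinearMap.id
  | p + 1, ι, a =>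
      (faceL (m + p) (ι 0) (a 0)).comp (stdC m p (fun r => ι r.succ) (fun r => a r.succ))

/-- Transport of chains along an equality of dimensions. -/
noncomputable def chainCongr {a b : ℕ} (h : a = b) : Chain a ≃ₗ[ℤ] Chain b :=
  Finsupp.domLCongr (Equiv.arrowCongr (finCongr h) (Equiv.refl (Option Bool)))

/-- The basis element of `I¹` with value `v`. -/
def cellOf (v : Option Bool) : Cell 1 := fun _ => v

/-- The `n`-fold tensor product of chains of `I¹`, as a chain of `Iⁿ`. -/
noncomputable def tens {n : ℕ} (c : Fin n → Chain 1) : Chain n :=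
  Finsupp.equivFunOnFinite.symm fun σ => ∏ j, (c j) (cellOf (σ j))

/-- `τ` has an "extreme" standard decomposition of constant sign `ε`: for its `r`-th
factor `∂_{i}^{α}` (`r`, `i` 1-indexed), `(−1)^{i−r} α = ε`. -/
def ExtremeSign {n : ℕ} (τ : Cell n) (ε : ℤ) : Prop :=
  ∀ (j : Fin n) (α : Bool), τ j = some α →
    (-1 : ℤ) ^ ((j : ℕ) + 1 + τ.sLe j) * sgn α = ε

/-- The basis element `τ` corresponds to a precubical operation complementary to
`∂_{k+1}^γ` (with `k : Fin n`, i.e. `k+1` in the paper's 1-indexing): its standard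
decomposition has no factor at position `k`, and inserting `∂_{k+1}^{−γ}` produces
a standard decomposition of constant sign. -/
def CellCompl {n : ℕ} (k : Fin n) (γ : Bool) (τ : Cell n) : Prop :=
  τ k = none ∧ ∃ ε : ℤ, ExtremeSign (Function.update τ k (some (!γ))) ε

/-- The chain homotopy `D` associated to the face `∂_{k+1}^γ` (0-indexed `k : Fin n`). -/
noncomputable def Dfun {n : ℕ} (k : Fin n) (γ : Bool) (c : Chain n) : Chain n :=
  c.sum fun τ z =>
    if τ k = some (!γ) then
      (z * (-((-1 : ℤ) ^ Cell.below τ k * sgn γ))) •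
        Finsupp.single (Function.update τ k (none : Option Bool)) 1
    else 0

/-- The double sequence `A_q^β` of Proposition 6.4. -/
noncomputable def Aseq {n : ℕ} (k : Fin n) (γ : Bool) (q : ℕ) (β : Bool) :
    ℕ → Bool → Chain n :=
  fun i α =>
    if i + 1 < q then atom (un n) α i
    else if i + 1 = q then
      (if α = β then atom (un n) β i
       else atom (un n) β i - bd (Dfun k γ (atom (un n) β i)))
    else if i = q then sgn β • Dfun k γ (atom (un n) β (q - 1))
    else 0

/-- The elements `A_q` of Proposition 6.5, defined inductively from the `A_q^β` by
`A_0 = ⟨σ⟩` and `A_q = A_q^− #_{q−1} A_{q−1} #_{q−1} A_q^+`. -/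
noncomputable def Aq {n : ℕ} (k : Fin n) (γ : Bool) : ℕ → (ℕ → Bool → Chain n)
  | 0 => atomSeq (kcell k γ)
  | q + 1 => comp q (comp q (Aseq k γ (q + 1) false) (Aq k γ q)) (Aseq k γ (q + 1) true)


/-! ### Auxiliary development for `atom_mem_nu` -/

section AuxNu

open Finset

variable {n : ℕ}

lemma twist_succ (α : Bool) (m : ℕ) : twist α (m + 1) = !(twist α m) := by
  by_cases h : Even m <;> simp [twist, Nat.even_add_one, h]

lemma twist_false_eq_not (m : ℕ) : twist false m = !(twist true m) := by
  by_cases h : Even m <;> simp [twist, h]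

lemma twist_zero (α : Bool) : twist α 0 = α := by simp [twist]

/-- `Good σ α τ`: `τ` is obtained from `σ` by filling some `none` positions with
the sign pattern arising from iterated `∂^α`. -/
def Good (σ : Cell n) (α : Bool) (τ : Cell n) : Prop :=
  (∀ j, σ j ≠ none → τ j = σ j) ∧
  ∀ j (β : Bool), σ j = none → τ j = some β → β = twist α (τ.below j)

open Classical in
/-- The explicit description of the atom chains. -/
noncomputable def E (σ : Cell n) (α : Bool) (q : ℕ) : Chain n :=
  Finsupp.equivFunOnFinite.symm fun τ => if Good σ α τ ∧ τ.dim = q then 1 else 0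

open Classical in
lemma E_apply (σ : Cell n) (α : Bool) (q : ℕ) (τ : Cell n) :
    E σ α q τ = if Good σ α τ ∧ τ.dim = q then 1 else 0 := rfl

/-! #### `below` and `dim` of updates -/

lemma below_update_none_self (υ : Cell n) (i : Fin n) :
    Cell.below (Function.update υ i none) i = υ.below i := by
  unfold Cell.below
  congr 1
  apply Finset.filter_congr
  intro j _
  by_cases hj : j < i
  · have hne : j ≠ i := ne_of_lt hj
    simp [hj, Function.update_apply, hne]
  · simp [hj]

lemma below_update_none (υ : Cell n) (i j : Fin n) (hii : υ i ≠ none) (hij : j ≠ i) :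
    Cell.below (Function.update υ i none) j = υ.below j + (if i < j then 1 else 0) := by
  unfold Cell.below
  by_cases hlt : i < j
  · rw [if_pos hlt]
    have hset : (Finset.univ.filter fun k => k < j ∧ Function.update υ i none k = none)
        = insert i (Finset.univ.filter fun k => k < j ∧ υ k = none) := by
      ext k
      simp only [Finset.mem_filter, Finset.mem_univ, true_and, Finset.mem_insert]
      by_cases hk : k = i
      · subst hk; simp [hlt]
      · simp [hk, Function.update_apply]
    rw [hset, Finset.card_insert_of_notMem (by simp [hii])]
  · rw [if_neg hlt, add_zero]
    congr 1
    apply Finset.filter_congr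
    intro k _
    by_cases hk : k = i
    · subst hk; simp only [Function.update_self]
      constructor
      · rintro ⟨h1, -⟩; exact absurd h1 hlt
      · rintro ⟨h1, -⟩; exact absurd h1 hlt
    · simp [Function.update_apply, hk]

lemma dim_update_none (υ : Cell n) (i : Fin n) (h : υ i ≠ none) :
    Cell.dim (Function.update υ i none) = υ.dim + 1 := by
  unfold Cell.dim
  have hset : (Finset.univ.filter fun k => Function.update υ i none k = none)
      = insert i (Finset.univ.filter fun k => υ k = none) := by
    ext k
    simp only [Finset.mem_filter, Finset.mem_univ, true_and, Finset.mem_insert]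
    by_cases hk : k = i
    · subst hk; simp
    · simp [Function.update_apply, hk]
  rw [hset, Finset.card_insert_of_notMem (by simp [h])]

/-! #### `Good` for updates -/

lemma good_update_iff (σ υ : Cell n) (α : Bool) (i : Fin n) (h : υ i ≠ none) :
    Good σ α (Function.update υ i none) ↔
      σ i = none ∧ (∀ j, σ j ≠ none → υ j = σ j) ∧
      (∀ j, σ j = none → υ j ≠ none → j < i → υ j = some (twist α (υ.below j))) ∧
      (∀ j, σ j = none → υ j ≠ none → i < j → υ j ≠ some (twist α (υ.below j))) := by
  constructor
  · rintro ⟨h1, h2⟩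
    have hσi : σ i = none := by
      by_contra hne
      have := h1 i hne
      rw [Function.update_self] at this
      exact hne this.symm
    refine ⟨hσi, ?_, ?_, ?_⟩
    · intro j hj
      have hji : j ≠ i := by rintro rfl; exact hj hσi
      have := h1 j hj
      rwa [Function.update_of_ne hji] at this
    · intro j hσj hυj hlt
      obtain ⟨β, hβ⟩ := Option.ne_none_iff_exists'.mp hυj
      have hji : j ≠ i := ne_of_lt hlt
      have hb := h2 j β hσj (by rwa [Function.update_of_ne hji])
      rw [below_update_none υ i j h hji, if_neg (asymm hlt), add_zero] at hb
      rw [hβ, hb]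
    · intro j hσj hυj hlt hcontra
      have hji : j ≠ i := by rintro rfl; exact lt_irrefl _ hlt
      have hb := h2 j (twist α (υ.below j)) hσj (by rwa [Function.update_of_ne hji])
      rw [below_update_none υ i j h hji, if_pos hlt, twist_succ] at hb
      simp at hb
  · rintro ⟨hσi, hc, hpre, hsuf⟩
    constructor
    · intro j hj
      have hji : j ≠ i := by rintro rfl; exact hj hσi
      rw [Function.update_of_ne hji]
      exact hc j hj
    · intro j β hσj hβ
      have hji : j ≠ i := by
        rintro rfl
        rw [Function.update_self] at hβ
        cases hβ
      rw [Function.update_of_ne hji] at hβ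
      rw [below_update_none υ i j h hji]
      rcases lt_trichotomy j i with hlt | heq | hgt
      · rw [if_neg (asymm hlt), add_zero]
        have hp := hpre j hσj (by simp [hβ]) hlt
        rw [hβ] at hp
        exact Option.some_inj.mp hp
      · exact absurd heq hji
      · rw [if_pos hgt, twist_succ]
        have hne := hsuf j hσj (by simp [hβ]) hgt
        rw [hβ] at hne
        cases hβt : twist α (υ.below j) <;> cases β <;> simp_all

lemma good_iff_forall (σ υ : Cell n) (α : Bool) (hc : ∀ j, σ j ≠ none → υ j = σ j) :
    Good σ α υ ↔ ∀ j, σ j = none → υ j ≠ none → υ j = some (twist α (υ.below j)) := by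
  constructor
  · rintro ⟨-, h2⟩ j hσj hυj
    obtain ⟨β, hβ⟩ := Option.ne_none_iff_exists'.mp hυj
    rw [hβ]
    exact congrArg some (h2 j β hσj hβ)
  · intro h
    refine ⟨hc, fun j β hσj hβ => ?_⟩
    have := h j hσj (by simp [hβ])
    rw [hβ] at this
    exact Option.some_inj.mp this

/-! #### pointwise lemmas for `Chain` operations -/

lemma posPart_apply (c : Chain n) (τ : Cell n) : posPart c τ = max (c τ) 0 := rfl

lemma negPart_apply (c : Chain n) (τ : Cell n) : negPart c τ = max (-(c τ)) 0 := rfl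

lemma posPart_sub_negPart (c : Chain n) : posPart c - negPart c = c := by
  ext τ
  rw [Finsupp.sub_apply, posPart_apply, negPart_apply]
  rcases le_total (c τ) 0 with h | h
  · rw [max_eq_right h, max_eq_left (by omega)]; omega
  · rw [max_eq_left h, max_eq_right (by omega)]; omega

lemma bd_zero : bd (0 : Chain n) = 0 := by
  simp [bd]

lemma bd_apply (c : Chain n) (υ : Cell n) :
    bd c υ = ∑ τ : Cell n, c τ * bdCell τ υ := by
  rw [bd, Finsupp.sum_apply, Finsupp.sum_fintype _ _ (fun τ => by simp)]
  exact Finset.sum_congr rfl fun τ _ => by rw [Finsupp.smul_apply, smul_eq_mul]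

lemma bdCell_apply (τ υ : Cell n) :
    bdCell τ υ = ∑ i ∈ Finset.univ.filter (fun i => τ i = none),
      (-1:ℤ) ^ (τ.below i) *
        ((if Function.update τ i (some true) = υ then (1:ℤ) else 0) -
         (if Function.update τ i (some false) = υ then (1:ℤ) else 0)) := by
  rw [bdCell, Finset.sum_apply']
  refine Finset.sum_congr rfl fun i _ => ?_
  rw [Finsupp.smul_apply, Finsupp.sub_apply, Finsupp.single_apply, Finsupp.single_apply,
    smul_eq_mul]

open Classical in
lemma sum_cell_term (σ : Cell n) (α : Bool) (m : ℕ) (υ : Cell n) (i : Fin n) :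
    (∑ τ : Cell n, if τ i = none then
        (E σ α m) τ * ((-1:ℤ) ^ (τ.below i) *
          ((if Function.update τ i (some true) = υ then (1:ℤ) else 0) -
           (if Function.update τ i (some false) = υ then (1:ℤ) else 0)))
      else 0)
    = if υ i ≠ none ∧ Good σ α (Function.update υ i none) ∧
          Cell.dim (Function.update υ i none) = m
      then (-1:ℤ) ^ (υ.below i) * (if υ i = some true then 1 else -1) else 0 := by
  by_cases hne : υ i = none
  · rw [if_neg (by rintro ⟨h, -⟩; exact h hne)]
    apply Finset.sum_eq_zero
    intro τ _
    by_cases hτi : τ i = none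
    · rw [if_pos hτi]
      have e : ∀ b : Bool, (if Function.update τ i (some b) = υ then (1:ℤ) else 0) = 0 := by
        intro b
        rw [if_neg]
        intro hcon
        have := congrFun hcon i
        rw [Function.update_self, hne] at this
        cases this
      rw [e true, e false]
      ring
    · rw [if_neg hτi]
  · have hmain : ∀ τ : Cell n, τ ∈ Finset.univ → τ ≠ Function.update υ i none →
        (if τ i = none then
          (E σ α m) τ * ((-1:ℤ) ^ (τ.below i) *
            ((if Function.update τ i (some true) = υ then (1:ℤ) else 0) -
             (if Function.update τ i (some false) = υ then (1:ℤ) else 0)))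
        else 0) = 0 := by
      intro τ _ hτne
      by_cases hτi : τ i = none
      · rw [if_pos hτi]
        have e : ∀ b : Bool, (if Function.update τ i (some b) = υ then (1:ℤ) else 0) = 0 := by
          intro b
          rw [if_neg]
          intro hcon
          apply hτne
          have : Function.update υ i none = τ := by
            rw [← hcon, Function.update_idem]
            exact Function.update_eq_self_iff.mpr hτi.symm
          exact this.symm
        rw [e true, e false]
        ring
      · rw [if_neg hτi]
    rw [Finset.sum_eq_single_of_mem (Function.update υ i none) (Finset.mem_univ _) hmain]
    rw [if_pos (Function.update_self i none υ)]
    rw [Function.update_idem, Function.update_idem, below_update_none_self]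
    have hind : ∀ b : Bool, (if Function.update υ i (some b) = υ then (1:ℤ) else 0)
        = (if υ i = some b then 1 else 0) := by
      intro b
      rw [if_congr (Function.update_eq_self_iff.trans eq_comm) rfl rfl]
    rw [hind true, hind false, E_apply]
    obtain ⟨β, hβ⟩ := Option.ne_none_iff_exists'.mp hne
    rw [if_congr (show (υ i ≠ none ∧ Good σ α (Function.update υ i none) ∧
          Cell.dim (Function.update υ i none) = m) ↔
        (Good σ α (Function.update υ i none) ∧ Cell.dim (Function.update υ i none) = m)
        from ⟨And.right, fun h => ⟨hne, h⟩⟩) rfl rfl]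
    by_cases hg : Good σ α (Function.update υ i none) ∧ Cell.dim (Function.update υ i none) = m
    · rw [if_pos hg, if_pos hg, one_mul]
      cases β
      · rw [hβ]
        norm_num
      · rw [hβ]
        norm_num
    · rw [if_neg hg, if_neg hg, zero_mul]

open Classical in
lemma bd_E_apply (σ : Cell n) (α : Bool) (m : ℕ) (υ : Cell n) :
    bd (E σ α m) υ =
      ∑ i : Fin n,
        (if υ i ≠ none ∧ Good σ α (Function.update υ i none) ∧
            Cell.dim (Function.update υ i none) = m
         then (-1:ℤ) ^ (υ.below i) * (if υ i = some true then 1 else -1)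
         else 0) := by
  rw [bd_apply]
  have step1 : ∀ τ : Cell n, (E σ α m) τ * bdCell τ υ
      = ∑ i : Fin n, (if τ i = none then
          (E σ α m) τ * ((-1:ℤ) ^ (τ.below i) *
           ((if Function.update τ i (some true) = υ then (1:ℤ) else 0) -
            (if Function.update τ i (some false) = υ then (1:ℤ) else 0))) else 0) := by
    intro τ
    rw [bdCell_apply, Finset.mul_sum, Finset.sum_filter]
  rw [Finset.sum_congr rfl fun τ _ => step1 τ, Finset.sum_comm]
  exact Finset.sum_congr rfl fun i _ => sum_cell_term σ α m υ i

/-! #### The combinatorial sum `Tsum` -/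

open Classical in
noncomputable def Tsum {ι : Type*} [LinearOrder ι] (F : Finset ι) (P : ι → Prop) : ℤ :=
  ∑ i ∈ F.filter (fun i => (∀ j ∈ F, j < i → P j) ∧ (∀ j ∈ F, i < j → ¬ P j)),
    (if P i then 1 else -1)

open Classical in
lemma Tsum_def {ι : Type*} [LinearOrder ι] (F : Finset ι) (P : ι → Prop) :
    Tsum F P =
      ∑ i ∈ F.filter (fun i => (∀ j ∈ F, j < i → P j) ∧ (∀ j ∈ F, i < j → ¬ P j)),
        (if P i then 1 else -1) := rfl

lemma Tsum_congr {ι : Type*} [LinearOrder ι] (F : Finset ι) (P Q : ι → Prop)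
    (h : ∀ j ∈ F, P j ↔ Q j) : Tsum F P = Tsum F Q := by
  classical
  rw [Tsum_def, Tsum_def]
  have hfil : (F.filter fun i => (∀ j ∈ F, j < i → P j) ∧ (∀ j ∈ F, i < j → ¬ P j))
      = F.filter fun i => (∀ j ∈ F, j < i → Q j) ∧ (∀ j ∈ F, i < j → ¬ Q j) := by
    apply Finset.filter_congr
    intro i _
    exact and_congr (forall₂_congr fun j hj => imp_congr Iff.rfl (h j hj))
      (forall₂_congr fun j hj => imp_congr Iff.rfl (not_congr (h j hj)))
  rw [hfil]
  apply Finset.sum_congr rfl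
  intro i hi
  rw [if_congr (h i (Finset.mem_filter.mp hi).1) rfl rfl]

lemma Tsum_all {ι : Type*} [LinearOrder ι] (F : Finset ι) (P : ι → Prop)
    (hP : ∀ j ∈ F, P j) (hF : F.Nonempty) : Tsum F P = 1 := by
  classical
  rw [Tsum_def]
  have hV : (F.filter fun i => (∀ j ∈ F, j < i → P j) ∧ (∀ j ∈ F, i < j → ¬ P j))
      = {F.max' hF} := by
    ext i
    simp only [Finset.mem_filter, Finset.mem_singleton]
    constructor
    · rintro ⟨hi, -, hsuf⟩
      by_contra hne
      have hlt : i < F.max' hF := lt_of_le_of_ne (Finset.le_max' F i hi) hne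
      exact hsuf _ (F.max'_mem hF) hlt (hP _ (F.max'_mem hF))
    · rintro rfl
      exact ⟨F.max'_mem hF, fun j hj _ => hP j hj,
        fun j hj hlt => absurd (F.le_max' j hj) (not_le.2 hlt)⟩
  rw [hV, Finset.sum_singleton, if_pos (hP _ (F.max'_mem hF))]

lemma Tsum_none {ι : Type*} [LinearOrder ι] (F : Finset ι) (P : ι → Prop)
    (hP : ∀ j ∈ F, ¬ P j) (hF : F.Nonempty) : Tsum F P = -1 := by
  classical
  rw [Tsum_def]
  have hV : (F.filter fun i => (∀ j ∈ F, j < i → P j) ∧ (∀ j ∈ F, i < j → ¬ P j))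
      = {F.min' hF} := by
    ext i
    simp only [Finset.mem_filter, Finset.mem_singleton]
    constructor
    · rintro ⟨hi, hpre, -⟩
      by_contra hne
      have hlt : F.min' hF < i := lt_of_le_of_ne (Finset.min'_le F i hi) (Ne.symm hne)
      exact hP _ (F.min'_mem hF) (hpre _ (F.min'_mem hF) hlt)
    · rintro rfl
      exact ⟨F.min'_mem hF,
        fun j hj hlt => absurd (F.min'_le j hj) (not_le.2 hlt),
        fun j hj _ => hP j hj⟩
  rw [hV, Finset.sum_singleton, if_neg (hP _ (F.min'_mem hF))]

lemma Tsum_mixed {ι : Type*} [LinearOrder ι] (F : Finset ι) (P : ι → Prop)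
    (h1 : ∃ j ∈ F, P j) (h2 : ∃ j ∈ F, ¬ P j) : Tsum F P = 0 := by
  classical
  rw [Tsum_def]
  have hM : (F.filter fun j => ¬ P j).Nonempty := by
    obtain ⟨j, hj, hjP⟩ := h2
    exact ⟨j, Finset.mem_filter.mpr ⟨hj, hjP⟩⟩
  set m := (F.filter fun j => ¬ P j).min' hM with hm
  have hmF : m ∈ F := (Finset.mem_filter.mp ((F.filter fun j => ¬ P j).min'_mem hM)).1
  have hmP : ¬ P m := (Finset.mem_filter.mp ((F.filter fun j => ¬ P j).min'_mem hM)).2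
  have hmin : ∀ j ∈ F, j < m → P j := by
    intro j hj hlt
    by_contra hnP
    exact absurd ((F.filter fun j => ¬ P j).min'_le j (Finset.mem_filter.mpr ⟨hj, hnP⟩))
      (not_le.2 hlt)
  by_cases H : ∀ j ∈ F, m < j → ¬ P j
  · obtain ⟨j₀, hj₀F, hj₀P⟩ := h1
    have hj₀m : j₀ < m := by
      rcases lt_trichotomy j₀ m with h | h | h
      · exact h
      · subst h; exact absurd hj₀P hmP
      · exact absurd hj₀P (H j₀ hj₀F h)
    have hG : (F.filter fun j => j < m).Nonempty := ⟨j₀, Finset.mem_filter.mpr ⟨hj₀F, hj₀m⟩⟩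
    set g := (F.filter fun j => j < m).max' hG with hgdef
    have hgF : g ∈ F := (Finset.mem_filter.mp ((F.filter fun j => j < m).max'_mem hG)).1
    have hgm : g < m := (Finset.mem_filter.mp ((F.filter fun j => j < m).max'_mem hG)).2
    have hgmax : ∀ j ∈ F, j < m → j ≤ g := fun j hj hlt =>
      (F.filter fun j => j < m).le_max' j (Finset.mem_filter.mpr ⟨hj, hlt⟩)
    have hPg : P g := hmin g hgF hgm
    have hV : (F.filter fun i => (∀ j ∈ F, j < i → P j) ∧ (∀ j ∈ F, i < j → ¬ P j))
        = {g, m} := by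
      ext i
      simp only [Finset.mem_filter, Finset.mem_insert, Finset.mem_singleton]
      constructor
      · rintro ⟨hiF, hpre, hsuf⟩
        rcases lt_trichotomy i m with him | him | him
        · left
          have hig : i ≤ g := hgmax i hiF him
          rcases lt_or_eq_of_le hig with hlt | heq
          · exact absurd hPg (hsuf g hgF hlt)
          · exact heq
        · right; exact him
        · exact absurd (hpre m hmF him) hmP
      · rintro (rfl | rfl)
        · refine ⟨hgF, fun j hj hlt => hmin j hj (lt_trans hlt hgm), fun j hj hlt => ?_⟩
          rcases lt_trichotomy j m with hjm | hjm | hjm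
          · exact absurd (hgmax j hj hjm) (not_le.2 hlt)
          · subst hjm; exact hmP
          · exact H j hj hjm
        · exact ⟨hmF, fun j hj hlt => hmin j hj hlt, fun j hj hlt => H j hj hlt⟩
    rw [hV, Finset.sum_pair (ne_of_lt hgm), if_pos hPg, if_neg hmP]
    ring
  · push_neg at H
    obtain ⟨j₁, hj₁F, hmj₁, hPj₁⟩ := H
    have hV : (F.filter fun i => (∀ j ∈ F, j < i → P j) ∧ (∀ j ∈ F, i < j → ¬ P j)) = ∅ := by
      rw [Finset.filter_eq_empty_iff]
      rintro i hiF ⟨hpre, hsuf⟩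
      rcases le_or_gt i m with him | him
      · exact hsuf j₁ hj₁F (lt_of_le_of_lt him hmj₁) hPj₁
      · exact hmP (hpre m hmF him)
    rw [hV, Finset.sum_empty]

/-! #### Translation of the boundary coefficients into `Tsum` -/

lemma chi_eq (υ : Cell n) (i : Fin n) (h : υ i ≠ none) :
    (-1:ℤ) ^ (υ.below i) * (if υ i = some true then 1 else -1)
      = if υ i = some (twist true (υ.below i)) then 1 else -1 := by
  obtain ⟨β, hβ⟩ := Option.ne_none_iff_exists'.mp h
  rcases Nat.even_or_odd (υ.below i) with he | ho
  · rw [he.neg_one_pow]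
    cases β <;> simp [hβ, twist, he]
  · rw [ho.neg_one_pow]
    cases β <;> simp [hβ, twist, Nat.not_even_iff_odd.mpr ho]

lemma QA_false_iff (υ : Cell n) (j : Fin n) (h : υ j ≠ none) :
    υ j = some (twist false (υ.below j)) ↔ ¬ (υ j = some (twist true (υ.below j))) := by
  obtain ⟨β, hβ⟩ := Option.ne_none_iff_exists'.mp h
  rw [hβ, twist_false_eq_not]
  cases hb : twist true (υ.below j) <;> cases β <;> simp

lemma cond_iff (σ υ : Cell n) (α : Bool) (q : ℕ)
    (hc : ∀ j, σ j ≠ none → υ j = σ j) (hd : υ.dim = q) (i : Fin n) :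
    (υ i ≠ none ∧ Good σ α (Function.update υ i none) ∧
        Cell.dim (Function.update υ i none) = q + 1)
    ↔ ((σ i = none ∧ υ i ≠ none) ∧
        ((∀ j, (σ j = none ∧ υ j ≠ none) → j < i → υ j = some (twist α (υ.below j))) ∧
         (∀ j, (σ j = none ∧ υ j ≠ none) → i < j → ¬ (υ j = some (twist α (υ.below j)))))) := by
  constructor
  · rintro ⟨hne, hg, -⟩
    obtain ⟨hσi, -, hpre, hsuf⟩ := (good_update_iff σ υ α i hne).mp hg
    exact ⟨⟨hσi, hne⟩, fun j hj hlt => hpre j hj.1 hj.2 hlt,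
      fun j hj hlt => hsuf j hj.1 hj.2 hlt⟩
  · rintro ⟨⟨hσi, hne⟩, hpre, hsuf⟩
    refine ⟨hne, (good_update_iff σ υ α i hne).mpr
      ⟨hσi, hc, fun j a b c => hpre j ⟨a, b⟩ c, fun j a b c => hsuf j ⟨a, b⟩ c⟩, ?_⟩
    rw [dim_update_none υ i hne, hd]

open Classical in
lemma bdE_eq_Tsum_true (σ : Cell n) (q : ℕ) (υ : Cell n)
    (hc : ∀ j, σ j ≠ none → υ j = σ j) (hd : υ.dim = q) :
    bd (E σ true (q+1)) υ
      = Tsum (Finset.univ.filter fun j => σ j = none ∧ υ j ≠ none)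
          (fun j => υ j = some (twist true (υ.below j))) := by
  rw [bd_E_apply, Tsum_def, Finset.sum_filter, Finset.sum_filter]
  apply Finset.sum_congr rfl
  intro i _
  rw [← ite_and]
  simp only [Finset.mem_filter, Finset.mem_univ, true_and]
  by_cases hcond : υ i ≠ none ∧ Good σ true (Function.update υ i none) ∧
      Cell.dim (Function.update υ i none) = q + 1
  · rw [if_pos hcond, if_pos ((cond_iff σ υ true q hc hd i).mp hcond)]
    have h1 := chi_eq υ i hcond.1
    by_cases hP : υ i = some (twist true (υ.below i))
    · rw [h1, if_pos hP, if_pos hP]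
    · rw [h1, if_neg hP, if_neg hP]
  · rw [if_neg hcond, if_neg (fun hh => hcond ((cond_iff σ υ true q hc hd i).mpr hh))]

open Classical in
lemma bdE_eq_Tsum_false (σ : Cell n) (q : ℕ) (υ : Cell n)
    (hc : ∀ j, σ j ≠ none → υ j = σ j) (hd : υ.dim = q) :
    bd (E σ false (q+1)) υ
      = - Tsum (Finset.univ.filter fun j => σ j = none ∧ υ j ≠ none)
          (fun j => υ j = some (twist false (υ.below j))) := by
  rw [bd_E_apply, Tsum_def, ← Finset.sum_neg_distrib, Finset.sum_filter, Finset.sum_filter]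
  apply Finset.sum_congr rfl
  intro i _
  rw [← ite_and]
  simp only [Finset.mem_filter, Finset.mem_univ, true_and]
  by_cases hcond : υ i ≠ none ∧ Good σ false (Function.update υ i none) ∧
      Cell.dim (Function.update υ i none) = q + 1
  · rw [if_pos hcond, if_pos ((cond_iff σ υ false q hc hd i).mp hcond)]
    have h1 := chi_eq υ i hcond.1
    have hQ := QA_false_iff υ i hcond.1
    by_cases hP : υ i = some (twist true (υ.below i))
    · rw [h1, if_pos hP, if_neg (fun hh => (hQ.mp hh) hP)]
      norm_num
    · rw [h1, if_neg hP, if_pos (hQ.mpr hP)]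
  · rw [if_neg hcond, if_neg (fun hh => hcond ((cond_iff σ υ false q hc hd i).mpr hh))]

lemma F_nonempty (σ υ : Cell n) (q : ℕ) (hc : ∀ j, σ j ≠ none → υ j = σ j)
    (hd : υ.dim = q) (hq : q + 1 ≤ σ.dim) :
    (Finset.univ.filter fun j => σ j = none ∧ υ j ≠ none).Nonempty := by
  by_contra h
  rw [Finset.not_nonempty_iff_eq_empty, Finset.filter_eq_empty_iff] at h
  have hus : υ = σ := by
    funext j
    by_cases hj : σ j = none
    · have := h (Finset.mem_univ j)
      push_neg at this
      rw [hj, this hj]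
    · exact hc j hj
  rw [hus] at hd
  omega

/-! #### The master lemma -/

open Classical in
lemma master (σ : Cell n) (q : ℕ) (hq : q + 1 ≤ σ.dim) :
    bd (E σ true (q+1)) = bd (E σ false (q+1)) ∧
    posPart (bd (E σ true (q+1))) = E σ true q ∧
    negPart (bd (E σ false (q+1))) = E σ false q := by
  have key : ∀ υ : Cell n,
      bd (E σ true (q+1)) υ = bd (E σ false (q+1)) υ ∧
      max (bd (E σ true (q+1)) υ) 0 = E σ true q υ ∧
      max (-(bd (E σ false (q+1)) υ)) 0 = E σ false q υ := by
    intro υ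
    by_cases hc : ∀ j, σ j ≠ none → υ j = σ j
    · by_cases hd : υ.dim = q
      · set F := Finset.univ.filter (fun j => σ j = none ∧ υ j ≠ none) with hFdef
        set P := fun j => υ j = some (twist true (υ.below j)) with hPdef
        have ht : bd (E σ true (q+1)) υ = Tsum F P := bdE_eq_Tsum_true σ q υ hc hd
        have hQP : ∀ j ∈ F, (υ j = some (twist false (υ.below j))) ↔ ¬ P j := by
          intro j hj
          exact QA_false_iff υ j (Finset.mem_filter.mp hj).2.2
        have hf : bd (E σ false (q+1)) υ = - Tsum F (fun j => ¬ P j) := by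
          rw [bdE_eq_Tsum_false σ q υ hc hd,
            Tsum_congr F (fun j => υ j = some (twist false (υ.below j))) (fun j => ¬ P j) hQP]
        have hFne : F.Nonempty := F_nonempty σ υ q hc hd hq
        have hEt : E σ true q υ = if ∀ j ∈ F, P j then 1 else 0 := by
          rw [E_apply]
          have : (Good σ true υ ∧ υ.dim = q) ↔ ∀ j ∈ F, P j := by
            rw [good_iff_forall σ υ true hc]
            simp only [hFdef, Finset.mem_filter, Finset.mem_univ, true_and, and_imp]
            exact ⟨fun hh => hh.1, fun hh => ⟨hh, hd⟩⟩
          rw [if_congr this rfl rfl]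
        have hEf : E σ false q υ = if ∀ j ∈ F, ¬ P j then 1 else 0 := by
          rw [E_apply]
          have : (Good σ false υ ∧ υ.dim = q) ↔ ∀ j ∈ F, ¬ P j := by
            rw [good_iff_forall σ υ false hc]
            constructor
            · rintro ⟨hh, -⟩ j hj
              exact (hQP j hj).mp
                (hh j (Finset.mem_filter.mp hj).2.1 (Finset.mem_filter.mp hj).2.2)
            · intro hh
              refine ⟨fun j h1 h2 => ?_, hd⟩
              have hjF : j ∈ F := Finset.mem_filter.mpr ⟨Finset.mem_univ j, h1, h2⟩
              exact (hQP j hjF).mpr (hh j hjF)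
          rw [if_congr this rfl rfl]
        by_cases hall : ∀ j ∈ F, P j
        · have h1 : Tsum F P = 1 := Tsum_all F P hall hFne
          have h2 : Tsum F (fun j => ¬ P j) = -1 :=
            Tsum_none F _ (fun j hj => not_not_intro (hall j hj)) hFne
          have hnf : ¬ ∀ j ∈ F, ¬ P j := by
            obtain ⟨j, hj⟩ := hFne
            intro hh; exact hh j hj (hall j hj)
          rw [ht, hf, h1, h2, hEt, hEf, if_pos hall, if_neg hnf]
          norm_num
        · by_cases hnone : ∀ j ∈ F, ¬ P j
          · have h1 : Tsum F P = -1 := Tsum_none F P hnone hFne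
            have h2 : Tsum F (fun j => ¬ P j) = 1 := Tsum_all F _ hnone hFne
            rw [ht, hf, h1, h2, hEt, hEf, if_neg hall, if_pos hnone]
            norm_num
          · push_neg at hall hnone
            obtain ⟨j₀, hj₀F, hj₀⟩ := hall
            obtain ⟨j₁, hj₁F, hj₁⟩ := hnone
            have h1 : Tsum F P = 0 := Tsum_mixed F P ⟨j₁, hj₁F, hj₁⟩ ⟨j₀, hj₀F, hj₀⟩
            have h2 : Tsum F (fun j => ¬ P j) = 0 :=
              Tsum_mixed F _ ⟨j₀, hj₀F, hj₀⟩ ⟨j₁, hj₁F, not_not_intro hj₁⟩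
            rw [ht, hf, h1, h2, hEt, hEf,
              if_neg (by intro hh; exact hj₀ (hh j₀ hj₀F)),
              if_neg (by intro hh; exact (hh j₁ hj₁F) hj₁)]
            norm_num
      · have hz : ∀ α : Bool, bd (E σ α (q+1)) υ = 0 := by
          intro α
          rw [bd_E_apply]
          apply Finset.sum_eq_zero
          intro i _
          rw [if_neg]
          rintro ⟨hne, -, hdim⟩
          rw [dim_update_none υ i hne] at hdim
          omega
        have hE : ∀ α : Bool, E σ α q υ = 0 := by
          intro α
          rw [E_apply, if_neg]
          rintro ⟨-, h⟩
          exact hd h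
        rw [hz true, hz false, hE true, hE false]
        norm_num
    · have hz : ∀ α : Bool, bd (E σ α (q+1)) υ = 0 := by
        intro α
        rw [bd_E_apply]
        apply Finset.sum_eq_zero
        intro i _
        rw [if_neg]
        rintro ⟨hne, hg, -⟩
        exact hc ((good_update_iff σ υ α i hne).mp hg).2.1
      have hE : ∀ α : Bool, E σ α q υ = 0 := by
        intro α
        rw [E_apply, if_neg]
        rintro ⟨hg, -⟩
        exact hc hg.1
      rw [hz true, hz false, hE true, hE false]
      norm_num
  refine ⟨Finsupp.ext fun υ => (key υ).1, Finsupp.ext fun υ => ?_, Finsupp.ext fun υ => ?_⟩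
  · rw [posPart_apply]; exact (key υ).2.1
  · rw [negPart_apply]; exact (key υ).2.2

/-! #### Identification of atoms with `E` -/

lemma good_self (σ : Cell n) (α : Bool) : Good σ α σ :=
  ⟨fun _ _ => rfl, fun j β hn hs => by rw [hn] at hs; cases hs⟩

open Classical in
lemma E_top (σ : Cell n) (α : Bool) : E σ α σ.dim = Finsupp.single σ 1 := by
  ext τ
  rw [E_apply, Finsupp.single_apply]
  by_cases h : τ = σ
  · subst h
    rw [if_pos ⟨good_self _ α, rfl⟩, if_pos rfl]
  · have hng : ¬ (Good σ α τ ∧ τ.dim = σ.dim) := by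
      rintro ⟨hg, hdim⟩
      apply h
      have hsub : (Finset.univ.filter fun j => τ j = none)
          ⊆ (Finset.univ.filter fun j => σ j = none) := by
        intro j hj
        simp only [Finset.mem_filter, Finset.mem_univ, true_and] at hj ⊢
        by_contra hσ
        have := hg.1 j hσ
        rw [hj] at this
        exact hσ this.symm
      have hcard : (Finset.univ.filter fun j => σ j = none).card
          ≤ (Finset.univ.filter fun j => τ j = none).card := by
        unfold Cell.dim at hdim
        omega
      have heq := Finset.eq_of_subset_of_card_le hsub hcard
      funext j
      by_cases hσj : σ j = none
      · have hj : j ∈ Finset.univ.filter fun j => σ j = none := by simp [hσj]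
        rw [← heq] at hj
        simp only [Finset.mem_filter, Finset.mem_univ, true_and] at hj
        rw [hj, hσj]
      · exact hg.1 j hσj
    rw [if_neg hng, if_neg (fun hh => h hh.symm)]

lemma bdp_E (σ : Cell n) (α : Bool) (q : ℕ) (hq : q + 1 ≤ σ.dim) :
    bdp α (E σ α (q+1)) = E σ α q := by
  obtain ⟨h1, h2, h3⟩ := master σ q hq
  cases α
  · rw [bdp, if_neg (by simp)]; exact h3
  · rw [bdp, if_pos rfl]; exact h2

lemma iterate_bdp (σ : Cell n) (α : Bool) :
    ∀ k q : ℕ, q + k = σ.dim → (bdp α)^[k] (Finsupp.single σ 1) = E σ α q := by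
  intro k
  induction k with
  | zero =>
    intro q hqk
    rw [Function.iterate_zero_apply]
    have : q = σ.dim := by omega
    rw [this, E_top]
  | succ k ih =>
    intro q hqk
    rw [Function.iterate_succ_apply', ih (q+1) (by omega)]
    exact bdp_E σ α q (by omega)

lemma atom_eq_E (σ : Cell n) (α : Bool) (q : ℕ) (hq : q ≤ σ.dim) :
    atom σ α q = E σ α q := by
  rw [atom, if_pos hq]
  exact iterate_bdp σ α (σ.dim - q) q (by omega)

/-! #### The augmentation of `E σ α 0` -/

lemma below_eq_zero_of_dim_zero (τ : Cell n) (h : τ.dim = 0) (j : Fin n) : τ.below j = 0 := by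
  unfold Cell.dim at h
  rw [Finset.card_eq_zero, Finset.filter_eq_empty_iff] at h
  unfold Cell.below
  rw [Finset.card_eq_zero, Finset.filter_eq_empty_iff]
  rintro k _ ⟨-, hk⟩
  exact h (Finset.mem_univ k) hk

lemma good_dim_zero_iff (σ : Cell n) (α : Bool) (τ : Cell n) :
    (Good σ α τ ∧ τ.dim = 0) ↔ τ = fun j => if σ j = none then some α else σ j := by
  constructor
  · rintro ⟨⟨h1, h2⟩, hd⟩
    have hnone : ∀ k, τ k ≠ none := by
      intro k hk
      have hdim := hd
      unfold Cell.dim at hdim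
      rw [Finset.card_eq_zero, Finset.filter_eq_empty_iff] at hdim
      exact hdim (Finset.mem_univ k) hk
    funext j
    by_cases hj : σ j = none
    · rw [if_pos hj]
      obtain ⟨β, hβ⟩ := Option.ne_none_iff_exists'.mp (hnone j)
      have := h2 j β hj hβ
      rw [below_eq_zero_of_dim_zero τ hd, twist_zero] at this
      rw [hβ, this]
    · rw [if_neg hj]
      exact h1 j hj
  · rintro rfl
    have hd : Cell.dim (fun j => if σ j = none then some α else σ j) = 0 := by
      unfold Cell.dim
      rw [Finset.card_eq_zero, Finset.filter_eq_empty_iff]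
      intro k _ hk
      by_cases h : σ k = none <;> simp [h] at hk
    refine ⟨⟨fun j hj => if_neg hj, fun j β hj hβ => ?_⟩, hd⟩
    rw [below_eq_zero_of_dim_zero _ hd, twist_zero]
    have hβ' : (if σ j = none then some α else σ j) = some β := hβ
    rw [if_pos hj] at hβ'
    exact (Option.some_inj.mp hβ').symm

open Classical in
lemma aug_E_zero (σ : Cell n) (α : Bool) : aug (E σ α 0) = 1 := by
  rw [aug, Finsupp.sum_fintype _ _ (fun τ => by split <;> rfl)]
  have hterm : ∀ τ : Cell n, (if τ.dim = 0 then (E σ α 0) τ else 0)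
      = if τ = (fun j => if σ j = none then some α else σ j) then 1 else 0 := by
    intro τ
    rw [E_apply]
    by_cases h : τ = fun j => if σ j = none then some α else σ j
    · have hgd := (good_dim_zero_iff σ α τ).mpr h
      rw [if_pos hgd.2, if_pos hgd, if_pos h]
    · rw [if_neg h]
      by_cases hd : τ.dim = 0
      · rw [if_pos hd, if_neg (fun hh => h ((good_dim_zero_iff σ α τ).mp hh))]
      · rw [if_neg hd]
  rw [Finset.sum_congr rfl fun τ _ => hterm τ]
  simp

open Classical in
lemma atomSeq_isNu (n : ℕ) (σ : Cell n) : IsNu (atomSeq σ) := by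
  refine ⟨?_, ?_, ?_, ?_⟩
  · intro i α τ hτ
    simp only [atomSeq] at hτ
    by_cases hi : i ≤ σ.dim
    · rw [atom_eq_E σ α i hi] at hτ
      have hne := Finsupp.mem_support_iff.mp hτ
      rw [E_apply] at hne
      by_cases h : Good σ α τ ∧ τ.dim = i
      · exact h.2
      · rw [if_neg h] at hne
        exact absurd rfl hne
    · rw [atom, if_neg hi] at hτ
      simp at hτ
  · intro i α
    rw [Finsupp.le_def]
    intro τ
    rw [Finsupp.coe_zero, Pi.zero_apply]
    simp only [atomSeq]
    by_cases hi : i ≤ σ.dim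
    · rw [atom_eq_E σ α i hi, E_apply]
      split <;> norm_num
    · rw [atom, if_neg hi]
      simp
  · intro α
    simp only [atomSeq]
    rw [atom_eq_E σ α 0 (Nat.zero_le _), aug_E_zero]
  · intro i α
    simp only [atomSeq]
    by_cases h1 : i + 1 ≤ σ.dim
    · have h0 : i ≤ σ.dim := by omega
      rw [atom_eq_E σ true i h0, atom_eq_E σ false i h0, atom_eq_E σ α (i+1) h1]
      obtain ⟨hcomm, hpos, hneg⟩ := master σ i h1
      have hEt : E σ true i = posPart (bd (E σ true (i+1))) := hpos.symm
      have hEf : E σ false i = negPart (bd (E σ true (i+1))) := by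
        rw [hcomm]; exact hneg.symm
      rw [hEt, hEf, posPart_sub_negPart]
      cases α
      · exact hcomm
      · rfl
    · rw [show atom σ α (i+1) = 0 from by rw [atom, if_neg h1], bd_zero]
      by_cases h2 : i ≤ σ.dim
      · have hi : i = σ.dim := by omega
        subst hi
        rw [atom, if_pos le_rfl, atom, if_pos le_rfl, Nat.sub_self,
          Function.iterate_zero_apply, Function.iterate_zero_apply, sub_self]
      · rw [atom, if_neg h2, atom, if_neg h2, sub_self]

end AuxNu

/-- for every standard basis element `σ` of `Iⁿ` the atom `⟨σ⟩` is an
element of `ν Iⁿ`: each chain `⟨σ⟩_i^α` is an `i`-chain which is a nonnegative sum of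
standard basis elements, `ε ⟨σ⟩_0^− = ε ⟨σ⟩_0^+ = 1`, and
`⟨σ⟩_i^+ − ⟨σ⟩_i^− = ∂ ⟨σ⟩_{i+1}^− = ∂ ⟨σ⟩_{i+1}^+` for all `i`. -/
theorem atom_mem_nu (n : ℕ) (σ : Cell n) : IsNu (atomSeq σ) := by
  exact atomSeq_isNu n σ

end CubicalNerve
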